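/- Let G=(V,E) be a finite directed graph whose vertex set is partitioned into layers with every edge going from one layer to the next (so G is acyclic and there are finitely many directed paths between any two vertices). Let R be the polynomial ring over the reals with one indeterminate X_e for each edge e in E, and for vertices u, w define h(u,w) in R as the sum, over all directed paths from u to w, of the product of the indeterminates of the edges of the path (with h(u,u) = 1 via the trivial path, and h(u,w) = 0 if there is no path from u to w). Suppose s_1, s_2, a, b are vertices such that there exist a path from s_1 to a and a path from s_2 to b that are vertex-disjoint. Then the polynomial h(s_1,a) * h(s_2,b) - h(s_1,b) * h(s_2,a) is not the zero element of R; equivalently, the determinant of the 2-by-2 transfer matrix from (s_1,s_2) to (a,b), viewed as a multivariate polynomial in the edge variables, is not identically zero. -/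

import Mathlib

open List

/-- `IsPath E p u w` : the nonempty list `p` of vertices is a directed path
from `u` to `w` with respect to the edge relation `E`. -/
def IsPath {V : Type*} (E : V → V → Prop) (p : List V) (u w : V) : Prop :=
  p ≠ [] ∧ p.head? = some u ∧ p.getLast? = some w ∧ p.Chain' E

/-- The monomial of a path: the product of the edge indeterminates along it
(in the polynomial ring over `ℝ` with one indeterminate per edge of `E`). -/
noncomputable def pathProd {V : Type*} (E : V → V → Prop) [DecidableRel E]
    (p : List V) : MvPolynomial {e : V × V // E e.1 e.2} ℝ :=
  ((p.zip p.tail).map (fun e =>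
    if h : E e.1 e.2 then MvPolynomial.X (⟨e, h⟩ : {e : V × V // E e.1 e.2})
    else 0)).prod

/-- `h(u,w)` : the transfer polynomial from `u` to `w`, i.e. the sum over all
directed paths from `u` to `w` of the product of the edge indeterminates of the
path (`1` for the trivial path, `0` if there is no path). -/
noncomputable def transferPoly {V : Type*} (E : V → V → Prop) [DecidableRel E]
    (u w : V) : MvPolynomial {e : V × V // E e.1 e.2} ℝ :=
  ∑ᶠ p ∈ {p : List V | IsPath E p u w}, pathProd E p

section Aux

open Classical

variable {V : Type*} {E : V → V → Prop}

lemma mem_of_head? {p : List V} {u : V} (h : p.head? = some u) : u ∈ p := by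
  cases p with
  | nil => simp at h
  | cons x t => simp_all

lemma mem_of_getLast? {p : List V} {w : V} (h : p.getLast? = some w) : w ∈ p := by
  obtain ⟨hne, rfl⟩ := List.mem_getLast?_eq_getLast h
  exact List.getLast_mem hne

/-- consecutive pairs of a chain are edges -/
lemma zip_mem_edge {p : List V} (hc : p.Chain' E) {e : V × V}
    (he : e ∈ p.zip p.tail) : E e.1 e.2 := by
  induction p with
  | nil => simp at he
  | cons x t ih =>
    cases t with
    | nil => simp at he
    | cons y r =>
      simp only [List.zip, List.tail_cons, List.zipWith_cons_cons] at he
      rcases List.mem_cons.mp he with rfl | h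
      · exact hc.rel_head
      · exact ih hc.tail h

/-- a path set is finite (layered graphs have nodup paths) -/
lemma isPath_finite [Fintype V] (layer : V → ℕ)
    (hlayer : ∀ u w : V, E u w → layer w = layer u + 1) (u w : V) :
    {p : List V | IsPath E p u w}.Finite := by
  apply (List.finite_length_le V (Fintype.card V)).subset
  rintro p ⟨-, -, -, hc⟩
  have hc' : p.Chain' (fun x y => layer x < layer y) := by
    refine hc.imp (fun a b hab => ?_)
    have := hlayer a b hab; omega
  have : IsTrans V (fun x y : V => layer x < layer y) := ⟨fun _ _ _ h1 h2 => h1.trans h2⟩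
  have hnd : p.Nodup := (List.isChain_iff_pairwise.mp hc').imp fun h => by
    intro heq; subst heq; exact lt_irrefl _ h
  exact hnd.length_le_card

/-- membership in zip pairs implies membership of both components -/
lemma fst_mem_of_zip {p : List V} {e : V × V} (he : e ∈ p.zip p.tail) : e.1 ∈ p :=
  (List.of_mem_zip he).1

lemma snd_mem_of_zip {p : List V} {e : V × V} (he : e ∈ p.zip p.tail) : e.2 ∈ p :=
  List.mem_of_mem_tail (List.of_mem_zip he).2

end Aux

section Eval

open Classical MvPolynomial

variable {V : Type*} (E : V → V → Prop) [DecidableRel E]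

/-- the evaluation point: 1 on edges of `P1 ++ P2`, 0 elsewhere -/
noncomputable def evPt (S : Set (V × V)) : {e : V × V // E e.1 e.2} → ℝ :=
  fun e => if (e : V × V) ∈ S then 1 else 0

noncomputable def ev (S : Set (V × V)) :
    MvPolynomial {e : V × V // E e.1 e.2} ℝ →+* ℝ :=
  MvPolynomial.eval (evPt E S)

/-- indicator of "all edges of p lie in S" -/
noncomputable def indP (S : Set (V × V)) (p : List V) : ℝ :=
  if ∀ e ∈ p.zip p.tail, e ∈ S then 1 else 0

lemma indP_nonneg (S : Set (V × V)) (p : List V) : 0 ≤ indP S p := by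
  unfold indP; split <;> norm_num

lemma ev_pathProd (S : Set (V × V)) {p : List V} (hc : p.Chain' E) :
    ev E S (pathProd E p) = indP S p := by
  unfold pathProd ev
  rw [map_list_prod, List.map_map]
  have hmap : (p.zip p.tail).map
      ((MvPolynomial.eval (evPt E S)) ∘ fun e =>
        if h : E e.1 e.2 then MvPolynomial.X (⟨e, h⟩ : {e : V × V // E e.1 e.2}) else 0)
      = (p.zip p.tail).map (fun e => if e ∈ S then (1 : ℝ) else 0) := by
    refine List.map_congr_left fun e he => ?_
    have hE : E e.1 e.2 := zip_mem_edge hc he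
    simp [hE, evPt]
  rw [hmap]
  have key : ∀ l : List (V × V),
      (l.map (fun e => if e ∈ S then (1 : ℝ) else 0)).prod
        = if ∀ e ∈ l, e ∈ S then (1 : ℝ) else 0 := by
    intro l
    induction l with
    | nil => simp
    | cons x t ih =>
      simp only [List.map_cons, List.prod_cons, ih]
      by_cases hx : x ∈ S
      · by_cases ht : ∀ e ∈ t, e ∈ S
        · simp [hx, ht, fun e (he : e ∈ x :: t) =>
            (List.mem_cons.mp he).elim (fun h => h ▸ hx) (ht e)]
        · have : ¬ ∀ e ∈ x :: t, e ∈ S := fun h => ht fun e he => h e (List.mem_cons_of_mem _ he)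
          simp [hx, ht, this]
      · have : ¬ ∀ e ∈ x :: t, e ∈ S := fun h => hx (h x List.mem_cons_self)
        simp [hx, this]
  rw [key]
  rfl

lemma ev_transferPoly [Fintype V] (S : Set (V × V)) (layer : V → ℕ)
    (hlayer : ∀ u w : V, E u w → layer w = layer u + 1) (u w : V) :
    ev E S (transferPoly E u w)
      = ∑ p ∈ (isPath_finite layer hlayer u w).toFinset, indP S p := by
  unfold transferPoly
  rw [finsum_mem_eq_finite_toFinset_sum _ (isPath_finite (E := E) layer hlayer u w), map_sum]
  refine Finset.sum_congr rfl fun p hp => ?_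
  have hpath : IsPath E p u w := by
    rw [Set.Finite.mem_toFinset] at hp; exact hp
  exact ev_pathProd E S hpath.2.2.2

end Eval

theorem statement19 {V : Type*} [Fintype V] (E : V → V → Prop) [DecidableRel E]
    (layer : V → ℕ) (hlayer : ∀ u w : V, E u w → layer w = layer u + 1)
    (s1 s2 a b : V) (P1 P2 : List V)
    (hP1 : IsPath E P1 s1 a) (hP2 : IsPath E P2 s2 b)
    (hdisj : P1.Disjoint P2) :
    transferPoly E s1 a * transferPoly E s2 b -
      transferPoly E s1 b * transferPoly E s2 a ≠ 0 := by
  classical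
  set S : Set (V × V) := {e | e ∈ P1.zip P1.tail ∨ e ∈ P2.zip P2.tail} with hS
  intro hzero
  have hev := congrArg (ev E S) hzero
  rw [map_sub, map_mul, map_mul, map_zero] at hev
  rw [ev_transferPoly E S layer hlayer s1 a, ev_transferPoly E S layer hlayer s2 b,
      ev_transferPoly E S layer hlayer s1 b, ev_transferPoly E S layer hlayer s2 a] at hev
  -- the term corresponding to no-path-from-s1-to-b (staying lemma)
  have stay : ∀ (P : List V) (hP : P ≠ []), ∀ (p : List V), p ≠ [] →
      (∀ e ∈ p.zip p.tail, e ∈ S) → p.head? = some s1 → s1 ∈ P1 →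
      (∀ x ∈ p, x ∈ P1) := by
    intro P hP p
    clear hP
    -- prove a generalized statement by induction
    suffices h : ∀ (p : List V) (x : V), p.head? = some x → x ∈ P1 →
        (∀ e ∈ p.zip p.tail, e ∈ S) → ∀ y ∈ p, y ∈ P1 by
      intro hpne hall hhead hs1
      exact h p s1 hhead hs1 hall
    intro p
    induction p with
    | nil => intro x hx; simp at hx
    | cons z t ih =>
      intro x hx hxP1 hall y hy
      simp only [List.head?_cons, Option.some.injEq] at hx
      subst hx
      rcases List.mem_cons.mp hy with rfl | hyt
      · exact hxP1
      · cases t with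
        | nil => simp at hyt
        | cons z' r =>
          have hpair : ((y_1 : V × V) → True) := fun _ => trivial
          have hmem : ((z, z') : V × V) ∈ (z :: z' :: r).zip (z' :: r) := by
            simp [List.zip]
          have hz' : z' ∈ P1 := by
            have hin : ((z, z') : V × V) ∈ S := hall _ hmem
            rcases hin with h1 | h2
            · exact snd_mem_of_zip h1
            · exact absurd hxP1 (fun hzP1 => hdisj hzP1 (fst_mem_of_zip h2))
          refine ih z' (by simp) hz' ?_ y hyt
          intro e he
          exact hall e (by
            simp only [List.zip, List.tail_cons, List.zipWith_cons_cons]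
            exact List.mem_cons_of_mem _ he)
  -- s1 ∈ P1, b ∈ P2
  have hs1P1 : s1 ∈ P1 := _root_.mem_of_head? hP1.2.1
  have hbP2 : b ∈ P2 := _root_.mem_of_getLast? hP2.2.2.1
  -- h(s1,b) evaluates to 0
  have hzero1 : ∑ p ∈ (isPath_finite layer hlayer s1 b).toFinset, indP S p = 0 := by
    refine Finset.sum_eq_zero fun p hp => ?_
    rw [Set.Finite.mem_toFinset] at hp
    obtain ⟨hpne, hph, hpl, hpc⟩ := hp
    unfold indP
    rw [if_neg]
    intro hall
    have hbP1 : b ∈ P1 :=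
      stay P1 hP1.1 p hpne hall hph hs1P1 b (_root_.mem_of_getLast? hpl)
    exact hdisj hbP1 hbP2
  -- h(s1,a) ≥ 1 and h(s2,b) ≥ 1
  have key : ∀ (P : List V) (u w : V) (hP : IsPath E P u w)
      (hedges : ∀ e ∈ P.zip P.tail, e ∈ S),
      (1 : ℝ) ≤ ∑ p ∈ (isPath_finite (E := E) layer hlayer u w).toFinset, indP S p := by
    intro P u w hP hedges
    have hPmem : P ∈ (isPath_finite (E := E) layer hlayer u w).toFinset := by
      rw [Set.Finite.mem_toFinset]; exact hP
    have hind : indP S P = 1 := by unfold indP; rw [if_pos hedges]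
    calc (1 : ℝ) = indP S P := hind.symm
      _ ≤ _ := Finset.single_le_sum (fun p _ => indP_nonneg S p) hPmem
  have h1 : (1 : ℝ) ≤ ∑ p ∈ (isPath_finite (E := E) layer hlayer s1 a).toFinset, indP S p :=
    key P1 s1 a hP1 (fun e he => Or.inl he)
  have h2 : (1 : ℝ) ≤ ∑ p ∈ (isPath_finite (E := E) layer hlayer s2 b).toFinset, indP S p :=
    key P2 s2 b hP2 (fun e he => Or.inr he)
  rw [hzero1, zero_mul, sub_zero] at hev
  nlinarith [h1, h2]
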